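/- (Invariance of the interval between two stationary states, bi-infinite network.) Let a ≤ b be real numbers with S(a) = a and S(b) = b. Let v : [0,∞) → ℝ^ℤ be such that for each j ∈ ℤ the map t ↦ v_j(t) is continuously differentiable and uniformly bounded, satisfying v_j'(t) = 𝒩(v_{j−1}(t), v_j(t), v_{j+1}(t)) for all t > 0 and j ∈ ℤ. If v_j(0) ∈ [a, b] for all j ∈ ℤ, then v_j(t) ∈ [a, b] for all t > 0 and all j ∈ ℤ. -/

import Mathlib

/-- The sigmoid nonlinearity `S(x) = 1/(1 + exp(-μ(x - θ)))`. -/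
noncomputable def sigmoid (μ θ x : ℝ) : ℝ := 1 / (1 + Real.exp (-μ * (x - θ)))

/-- The nonlinearity
`𝒩(u,v,w) = (1−p−q)·(S(u) − v) + p·S'(v)·(u − S(v)) + q·(S(w) − v)`. -/
noncomputable def Nfun (μ θ p q u v w : ℝ) : ℝ :=
  (1 - p - q) * (sigmoid μ θ u - v)
    + p * deriv (sigmoid μ θ) v * (u - sigmoid μ θ v)
    + q * (sigmoid μ θ w - v)

noncomputable def sigDeriv (μ θ x : ℝ) : ℝ :=
  μ * Real.exp (-μ * (x - θ)) / (1 + Real.exp (-μ * (x - θ))) ^ 2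

lemma one_add_exp_pos (y : ℝ) : 0 < 1 + Real.exp y := by positivity

lemma sigmoid_hasDerivAt (μ θ x : ℝ) : HasDerivAt (sigmoid μ θ) (sigDeriv μ θ x) x := by
  have h1 : HasDerivAt (fun x : ℝ => -μ * (x - θ)) (-μ) x := by
    simpa using ((hasDerivAt_id x).sub_const θ).const_mul (-μ)
  have h2 := h1.exp
  have h3 : HasDerivAt (fun x : ℝ => 1 + Real.exp (-μ * (x - θ)))
      (Real.exp (-μ * (x - θ)) * (-μ)) x := h2.const_add 1
  have h4 := h3.inv (ne_of_gt (one_add_exp_pos _))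
  have h5 : sigmoid μ θ = fun x => (1 + Real.exp (-μ * (x - θ)))⁻¹ := by
    funext y; simp [sigmoid, one_div]
  rw [h5]
  have h6 : sigDeriv μ θ x = -(Real.exp (-μ * (x - θ)) * (-μ)) / (1 + Real.exp (-μ * (x - θ))) ^ 2 := by
    unfold sigDeriv; ring
  rw [h6]
  exact h4

lemma deriv_sigmoid (μ θ x : ℝ) : deriv (sigmoid μ θ) x = sigDeriv μ θ x :=
  (sigmoid_hasDerivAt μ θ x).deriv

lemma sigDeriv_nonneg {μ : ℝ} (hμ : 0 ≤ μ) (θ x : ℝ) : 0 ≤ sigDeriv μ θ x := by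
  unfold sigDeriv; positivity

lemma sigDeriv_le {μ : ℝ} (hμ : 0 ≤ μ) (θ x : ℝ) : sigDeriv μ θ x ≤ μ / 4 := by
  unfold sigDeriv
  rw [div_le_iff₀ (by positivity)]
  nlinarith [sq_nonneg (1 - Real.exp (-μ * (x - θ))), Real.exp_pos (-μ * (x - θ))]

lemma sigmoid_nonneg (μ θ x : ℝ) : 0 ≤ sigmoid μ θ x := by
  unfold sigmoid; positivity

lemma sigmoid_le_one (μ θ x : ℝ) : sigmoid μ θ x ≤ 1 := by
  unfold sigmoid
  rw [div_le_one (one_add_exp_pos _)]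
  linarith [Real.exp_pos (-μ * (x - θ))]

lemma sigmoid_mono {μ : ℝ} (hμ : 0 ≤ μ) (θ : ℝ) {x y : ℝ} (hxy : x ≤ y) :
    sigmoid μ θ x ≤ sigmoid μ θ y := by
  unfold sigmoid
  apply one_div_le_one_div_of_le (one_add_exp_pos _)
  have : -μ * (y - θ) ≤ -μ * (x - θ) := by nlinarith
  linarith [Real.exp_le_exp.2 this]

lemma sigmoid_sub_le {μ : ℝ} (hμ : 0 ≤ μ) (θ : ℝ) {x y : ℝ} (hxy : x ≤ y) :
    sigmoid μ θ y - sigmoid μ θ x ≤ μ / 4 * (y - x) := by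
  rcases eq_or_lt_of_le hxy with rfl | hlt
  · simp
  obtain ⟨c, _, hc⟩ := exists_hasDerivAt_eq_slope (sigmoid μ θ) (sigDeriv μ θ) hlt
    (fun u _ => (sigmoid_hasDerivAt μ θ u).continuousAt.continuousWithinAt)
    (fun u _ => sigmoid_hasDerivAt μ θ u)
  have h4 := sigDeriv_le hμ θ c
  have hyx : 0 < y - x := by linarith
  have : sigmoid μ θ y - sigmoid μ θ x = sigDeriv μ θ c * (y - x) := by
    field_simp at hc; linarith [hc]
  rw [this]
  exact mul_le_mul_of_nonneg_right h4 hyx.le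

lemma sigmoid_flip (μ θ x : ℝ) : sigmoid μ (1 - θ) (1 - x) = 1 - sigmoid μ θ x := by
  unfold sigmoid
  rw [show -μ * ((1 - x) - (1 - θ)) = -(-μ * (x - θ)) by ring, Real.exp_neg]
  have h := (one_add_exp_pos (-μ * (x - θ))).ne'
  have he := (Real.exp_pos (-μ * (x - θ))).ne'
  field_simp
  ring

lemma sigDeriv_flip (μ θ x : ℝ) : sigDeriv μ (1 - θ) (1 - x) = sigDeriv μ θ x := by
  unfold sigDeriv
  rw [show -μ * ((1 - x) - (1 - θ)) = -(-μ * (x - θ)) by ring, Real.exp_neg]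
  have h := (one_add_exp_pos (-μ * (x - θ))).ne'
  have he := (Real.exp_pos (-μ * (x - θ))).ne'
  field_simp
  ring

lemma Nfun_flip (μ θ p q u v w : ℝ) :
    Nfun μ (1 - θ) p q (1 - u) (1 - v) (1 - w) = -Nfun μ θ p q u v w := by
  unfold Nfun
  rw [sigmoid_flip μ θ u, sigmoid_flip μ θ v, sigmoid_flip μ θ w,
    deriv_sigmoid, deriv_sigmoid, sigDeriv_flip μ θ v]
  ring

/-- One-sided mean value inequality with derivative bound only on the open interval. -/
lemma oneSidedMVT {f f' : ℝ → ℝ} {s t r : ℝ} (hst : s ≤ t)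
    (hf : ∀ u ∈ Set.Icc s t, HasDerivWithinAt f (f' u) (Set.Icc s t) u)
    (hbound : ∀ u ∈ Set.Ioo s t, f' u ≤ r) : f t - f s ≤ r * (t - s) := by
  rcases eq_or_lt_of_le hst with rfl | hlt
  · simp
  have key : ∀ u ∈ Set.Ioo s t,
      HasDerivAt (fun y => f y - r * y) (f' u - r) u := by
    intro u hu
    have h1 : HasDerivAt f (f' u) u :=
      (hf u (Set.Ioo_subset_Icc_self hu)).hasDerivAt (Icc_mem_nhds hu.1 hu.2)
    exact (h1.sub ((hasDerivAt_id' u).const_mul r)).congr_deriv (by ring)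
  have hg : AntitoneOn (fun y => f y - r * y) (Set.Icc s t) := by
    apply antitoneOn_of_deriv_nonpos (convex_Icc s t)
    · exact ContinuousOn.sub (fun u hu => (hf u hu).continuousWithinAt)
        (continuous_const.mul continuous_id).continuousOn
    · intro u hu
      rw [interior_Icc] at hu
      exact (key u hu).differentiableAt.differentiableWithinAt
    · intro u hu
      rw [interior_Icc] at hu
      rw [(key u hu).deriv]
      linarith [hbound u hu]
  have := hg ⟨le_rfl, hst⟩ ⟨hst, le_rfl⟩ hst
  dsimp at this
  linarith

set_option maxHeartbeats 1600000 in
/-- The key one-sided invariance lemma: components stay below a fixed point `b` of the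
sigmoid if they start below it. -/
lemma upper_invariant (μ θ p q : ℝ) (hμ : 0 < μ)
    (hp : 0 ≤ p) (hq0 : 0 ≤ q) (hpq : p + q ≤ 1)
    (b : ℝ) (hb : sigmoid μ θ b = b)
    (v v' : ℝ → ℤ → ℝ)
    (hv : ∀ j : ℤ, ∀ t ∈ Set.Ici (0 : ℝ),
      HasDerivWithinAt (fun s => v s j) (v' t j) (Set.Ici (0 : ℝ)) t)
    (M : ℝ) (hM : 0 < M)
    (hbound : ∀ t ∈ Set.Ici (0 : ℝ), ∀ j : ℤ, |v t j| ≤ M)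
    (heq : ∀ t > (0 : ℝ), ∀ j : ℤ,
      v' t j = Nfun μ θ p q (v t (j - 1)) (v t j) (v t (j + 1)))
    (hinit : ∀ j : ℤ, v 0 j ≤ b) :
    ∀ t > (0 : ℝ), ∀ j : ℤ, v t j ≤ b := by
  -- uniform derivative bound
  set C : ℝ := 2 * (1 + M) + μ / 4 * (M + 1) with hCdef
  have hC0 : 0 < C := by positivity
  have hderiv_bound : ∀ s : ℝ, 0 < s → ∀ j : ℤ, |v' s j| ≤ C := by
    intro s hs j
    rw [heq s hs j]
    have h1 := abs_le.1 (hbound s hs.le (j - 1))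
    have h2 := abs_le.1 (hbound s hs.le j)
    have h3 := abs_le.1 (hbound s hs.le (j + 1))
    unfold Nfun
    rw [deriv_sigmoid]
    have e1 : |(1 - p - q) * (sigmoid μ θ (v s (j - 1)) - v s j)| ≤ 1 + M := by
      rw [abs_mul]
      have ha1 : |1 - p - q| ≤ 1 := by rw [abs_le]; constructor <;> linarith
      have ha2 : |sigmoid μ θ (v s (j - 1)) - v s j| ≤ 1 + M := by
        rw [abs_le]
        have := sigmoid_nonneg μ θ (v s (j - 1))
        have := sigmoid_le_one μ θ (v s (j - 1))
        constructor <;> linarith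
      calc |1 - p - q| * |sigmoid μ θ (v s (j - 1)) - v s j| ≤ 1 * (1 + M) :=
            mul_le_mul ha1 ha2 (abs_nonneg _) one_pos.le
        _ = 1 + M := one_mul _
    have e3 : |q * (sigmoid μ θ (v s (j + 1)) - v s j)| ≤ 1 + M := by
      rw [abs_mul]
      have ha1 : |q| ≤ 1 := by rw [abs_le]; constructor <;> linarith
      have ha2 : |sigmoid μ θ (v s (j + 1)) - v s j| ≤ 1 + M := by
        rw [abs_le]
        have := sigmoid_nonneg μ θ (v s (j + 1))
        have := sigmoid_le_one μ θ (v s (j + 1))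
        constructor <;> linarith
      calc |q| * |sigmoid μ θ (v s (j + 1)) - v s j| ≤ 1 * (1 + M) :=
            mul_le_mul ha1 ha2 (abs_nonneg _) one_pos.le
        _ = 1 + M := one_mul _
    have e2 : |p * sigDeriv μ θ (v s j) * (v s (j - 1) - sigmoid μ θ (v s j))|
        ≤ μ / 4 * (M + 1) := by
      rw [abs_mul, abs_mul]
      have ha1 : |p| ≤ 1 := by rw [abs_le]; constructor <;> linarith
      have ha2 : |sigDeriv μ θ (v s j)| ≤ μ / 4 := by
        rw [abs_le]
        have := sigDeriv_nonneg hμ.le θ (v s j)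
        have := sigDeriv_le hμ.le θ (v s j)
        constructor <;> linarith
      have ha3 : |v s (j - 1) - sigmoid μ θ (v s j)| ≤ M + 1 := by
        rw [abs_le]
        have := sigmoid_nonneg μ θ (v s j)
        have := sigmoid_le_one μ θ (v s j)
        constructor <;> linarith
      calc |p| * |sigDeriv μ θ (v s j)| * |v s (j - 1) - sigmoid μ θ (v s j)|
          ≤ 1 * (μ / 4) * (M + 1) := by
            apply mul_le_mul _ ha3 (abs_nonneg _) (by positivity)
            exact mul_le_mul ha1 ha2 (abs_nonneg _) one_pos.le
        _ = μ / 4 * (M + 1) := by ring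
    calc |(1 - p - q) * (sigmoid μ θ (v s (j - 1)) - v s j)
          + p * sigDeriv μ θ (v s j) * (v s (j - 1) - sigmoid μ θ (v s j))
          + q * (sigmoid μ θ (v s (j + 1)) - v s j)|
        ≤ |(1 - p - q) * (sigmoid μ θ (v s (j - 1)) - v s j)
          + p * sigDeriv μ θ (v s j) * (v s (j - 1) - sigmoid μ θ (v s j))|
          + |q * (sigmoid μ θ (v s (j + 1)) - v s j)| := abs_add_le _ _
      _ ≤ |(1 - p - q) * (sigmoid μ θ (v s (j - 1)) - v s j)|
          + |p * sigDeriv μ θ (v s j) * (v s (j - 1) - sigmoid μ θ (v s j))|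
          + |q * (sigmoid μ θ (v s (j + 1)) - v s j)| := by
            linarith [abs_add_le ((1 - p - q) * (sigmoid μ θ (v s (j - 1)) - v s j))
              (p * sigDeriv μ θ (v s j) * (v s (j - 1) - sigmoid μ θ (v s j)))]
      _ ≤ C := by rw [hCdef]; linarith
  -- uniform Lipschitz bound on each component
  have hlip : ∀ j : ℤ, ∀ s t : ℝ, 0 ≤ s → s ≤ t → |v t j - v s j| ≤ C * (t - s) := by
    intro j s t hs hst
    have hsub : Set.Icc s t ⊆ Set.Ici (0 : ℝ) := fun x hx => le_trans hs hx.1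
    have hup : v t j - v s j ≤ C * (t - s) :=
      oneSidedMVT hst (fun u hu => (hv j u (hsub hu)).mono hsub)
        (fun u hu => (abs_le.1 (hderiv_bound u (lt_of_le_of_lt hs hu.1) j)).2)
    have hdown : -v t j - -v s j ≤ C * (t - s) :=
      oneSidedMVT (f := fun y => -v y j) (f' := fun u => -(v' u j)) hst
        (fun u hu => ((hv j u (hsub hu)).mono hsub).neg)
        (fun u hu => by
          have h := (abs_le.1 (hderiv_bound u (lt_of_le_of_lt hs hu.1) j)).1
          show -(v' u j) ≤ C
          linarith)
    rw [abs_le]; constructor <;> linarith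
  -- the supremum function
  set m : ℝ → ℝ := fun t => ⨆ j : ℤ, v t j with hmdef
  have hbdd : ∀ t : ℝ, 0 ≤ t → BddAbove (Set.range fun j : ℤ => v t j) := by
    intro t ht
    exact ⟨M, by rintro _ ⟨j, rfl⟩; exact (abs_le.1 (hbound t ht j)).2⟩
  have hle_m : ∀ t : ℝ, 0 ≤ t → ∀ j : ℤ, v t j ≤ m t :=
    fun t ht j => le_ciSup (hbdd t ht) j
  have hm_le : ∀ (t : ℝ) (z : ℝ), (∀ j : ℤ, v t j ≤ z) → m t ≤ z :=
    fun t z h => ciSup_le h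
  have hm_lip : ∀ s t : ℝ, 0 ≤ s → s ≤ t → |m t - m s| ≤ C * (t - s) := by
    intro s t hs hst
    have h1 : m t ≤ m s + C * (t - s) := hm_le _ _ (fun j => by
      have ha := (abs_le.1 (hlip j s t hs hst)).2
      have hbb := hle_m s hs j
      linarith)
    have h2 : m s ≤ m t + C * (t - s) := hm_le _ _ (fun j => by
      have ha := (abs_le.1 (hlip j s t hs hst)).1
      have hbb := hle_m t (hs.trans hst) j
      linarith)
    rw [abs_le]; constructor <;> linarith
  have hm_cont : ContinuousOn m (Set.Ici (0 : ℝ)) := by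
    apply LipschitzOnWith.continuousOn (K := Real.toNNReal C)
    apply LipschitzOnWith.of_dist_le_mul
    intro x hx y hy
    rw [Real.dist_eq, Real.dist_eq, Real.coe_toNNReal C hC0.le]
    rcases le_total x y with h | h
    · have := hm_lip x y hx h
      rw [abs_sub_comm]
      calc |m y - m x| ≤ C * (y - x) := this
        _ ≤ C * |x - y| := by
            rw [abs_sub_comm, abs_of_nonneg (by linarith : (0:ℝ) ≤ y - x)]
    · have := hm_lip y x hy h
      calc |m x - m y| ≤ C * (x - y) := this
        _ ≤ C * |x - y| := by rw [abs_of_nonneg (by linarith : (0:ℝ) ≤ x - y)]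
  -- key differential estimate above the fixed point
  have hkey : ∀ s : ℝ, 0 < s → ∀ j : ℤ, b ≤ v s j → v' s j ≤ μ / 4 * (m s - b) := by
    intro s hs j hbv
    rw [heq s hs j]
    have hms : b ≤ m s := le_trans hbv (hle_m s hs.le j)
    have hδ : 0 ≤ m s - b := by linarith
    have h1 : sigmoid μ θ (v s (j - 1)) - v s j ≤ μ / 4 * (m s - b) := by
      have hmono := sigmoid_mono hμ.le θ (hle_m s hs.le (j - 1))
      have hsub := sigmoid_sub_le hμ.le θ hms
      rw [hb] at hsub
      linarith
    have h3 : sigmoid μ θ (v s (j + 1)) - v s j ≤ μ / 4 * (m s - b) := by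
      have hmono := sigmoid_mono hμ.le θ (hle_m s hs.le (j + 1))
      have hsub := sigmoid_sub_le hμ.le θ hms
      rw [hb] at hsub
      linarith
    have h2 : v s (j - 1) - sigmoid μ θ (v s j) ≤ m s - b := by
      have hSb := sigmoid_mono hμ.le θ hbv
      rw [hb] at hSb
      have := hle_m s hs.le (j - 1)
      linarith
    unfold Nfun
    rw [deriv_sigmoid]
    have hd0 := sigDeriv_nonneg hμ.le θ (v s j)
    have hd4 := sigDeriv_le hμ.le θ (v s j)
    have t1 : (1 - p - q) * (sigmoid μ θ (v s (j - 1)) - v s j)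
        ≤ (1 - p - q) * (μ / 4 * (m s - b)) :=
      mul_le_mul_of_nonneg_left h1 (by linarith)
    have t2 : sigDeriv μ θ (v s j) * (v s (j - 1) - sigmoid μ θ (v s j))
        ≤ μ / 4 * (m s - b) := by
      calc sigDeriv μ θ (v s j) * (v s (j - 1) - sigmoid μ θ (v s j))
          ≤ sigDeriv μ θ (v s j) * (m s - b) := mul_le_mul_of_nonneg_left h2 hd0
        _ ≤ μ / 4 * (m s - b) := mul_le_mul_of_nonneg_right hd4 hδ
    have t2' : p * sigDeriv μ θ (v s j) * (v s (j - 1) - sigmoid μ θ (v s j))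
        ≤ p * (μ / 4 * (m s - b)) := by
      rw [mul_assoc]
      exact mul_le_mul_of_nonneg_left t2 hp
    have t3 : q * (sigmoid μ θ (v s (j + 1)) - v s j) ≤ q * (μ / 4 * (m s - b)) :=
      mul_le_mul_of_nonneg_left h3 hq0
    have hsum : (1 - p - q) * (μ / 4 * (m s - b)) + p * (μ / 4 * (m s - b))
        + q * (μ / 4 * (m s - b)) = μ / 4 * (m s - b) := by ring
    linarith
  -- the comparison argument
  intro t0 ht0 j0
  set L : ℝ := μ / 4 + 1 with hLdef
  have hcomp : ∀ ε > (0 : ℝ), m t0 ≤ b + ε * Real.exp (L * t0) := by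
    intro ε hε
    set B : ℝ → ℝ := fun s => b + ε * Real.exp (L * s) with hBdef
    set B' : ℝ → ℝ := fun s => ε * (Real.exp (L * s) * (L * 1)) with hB'def
    set F : ℝ → ℝ := fun x =>
      if m x = B x then (μ / 4 * (B x - b) + B' x) / 2 else C with hFdef
    have hBx : ∀ x : ℝ, B x - b = ε * Real.exp (L * x) := by
      intro x; rw [hBdef]; ring
    have hB'x : ∀ x : ℝ, B' x = μ / 4 * (ε * Real.exp (L * x)) + ε * Real.exp (L * x) := by
      intro x; rw [hB'def, hLdef]; ring
    have hmain := image_le_of_liminf_slope_right_lt_deriv_boundary'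
      (f := m) (f' := F) (a := 0) (b := t0) (B := B) (B' := B')
      (hm_cont.mono Set.Icc_subset_Ici_self)
      ?_ ?_ ?_ ?_ ?_
    · exact hmain ⟨ht0.le, le_rfl⟩
    · -- liminf slope condition
      intro x hx r hr
      have hx0 : (0 : ℝ) ≤ x := hx.1
      by_cases hmb : m x = B x
      · -- at a contact point
        rw [hFdef] at hr
        simp only [if_pos hmb] at hr
        set D : ℝ := ε * Real.exp (L * x) with hDdef
        have hDpos : 0 < D := by positivity
        have hmx : m x = b + D := by rw [hmb, hBdef]
        set η : ℝ := D / μ with hηdef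
        have hηpos : 0 < η := by positivity
        set r₁ : ℝ := μ / 4 * (D + η) with hr₁def
        have hr₁0 : 0 ≤ r₁ := by positivity
        have hr₁lt : r₁ < r := by
          have h1 : (μ / 4 * (B x - b) + B' x) / 2
              = μ / 4 * D + D / 2 := by rw [hBx, hB'x, ← hDdef]; ring
          have h2 : r₁ = μ / 4 * D + D / 4 := by
            rw [hr₁def, hηdef]; field_simp
          rw [h1] at hr
          rw [h2]
          linarith
        set h₀ : ℝ := η / (C + 1) with hh₀def
        have hh₀pos : 0 < h₀ := by positivity
        have hmub : ∀ s : ℝ, x ≤ s → s ≤ x + h₀ → m s ≤ m x + η := by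
          intro s hxs hsh
          have h1 := (abs_le.1 (hm_lip x s hx0 hxs)).2
          have h2 : C * (s - x) ≤ C * h₀ :=
            mul_le_mul_of_nonneg_left (by linarith) hC0.le
          have h3 : C * h₀ ≤ η := by
            rw [hh₀def, show C * (η / (C + 1)) = C * η / (C + 1) by ring,
              div_le_iff₀ (by positivity : (0:ℝ) < C + 1)]
            nlinarith
          linarith
        have hev : ∀ z ∈ Set.Ioc x (x + h₀), slope m x z < r := by
          intro z hz
          have hxz : x < z := hz.1
          have hz0 : (0 : ℝ) ≤ z := le_trans hx0 hxz.le
          -- componentwise estimate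
          have hcomp_j : ∀ j : ℤ, v z j ≤ m x + r₁ * (z - x) := by
            intro j
            have hbmx : b < m x := by rw [hmx]; linarith
            by_cases hvzj : v z j ≤ b
            · nlinarith [mul_nonneg hr₁0 (show (0:ℝ) ≤ z - x by linarith)]
            · push_neg at hvzj
              have hcont_v : ContinuousOn (fun s => v s j) (Set.Icc x z) := by
                intro u hu
                exact ((hv j u (le_trans hx0 hu.1)).continuousWithinAt).mono
                  (fun y hy => le_trans hx0 hy.1)
              set A : Set ℝ := Set.Icc x z ∩ (fun s => v s j) ⁻¹' Set.Iic b with hAdef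
              have hAclosed : IsClosed A :=
                hcont_v.preimage_isClosed_of_isClosed isClosed_Icc isClosed_Iic
              have hAbdd : BddAbove A := ⟨z, fun u hu => hu.1.2⟩
              have hbound_r₁ : ∀ u : ℝ, x < u → u < z → b ≤ v u j → v' u j ≤ r₁ := by
                intro u hxu huz hbu
                have hu0 : 0 < u := lt_of_le_of_lt hx0 hxu
                have hk := hkey u hu0 j hbu
                have hmu : m u ≤ m x + η := hmub u hxu.le (le_trans huz.le hz.2)
                have : μ / 4 * (m u - b) ≤ μ / 4 * (m x + η - b) :=
                  mul_le_mul_of_nonneg_left (by linarith) (by positivity)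
                have hfin : μ / 4 * (m x + η - b) = r₁ := by
                  rw [hr₁def, hmx]; ring
                linarith
              by_cases hA : A.Nonempty
              · set s₁ : ℝ := sSup A with hs₁def
                have hs₁mem : s₁ ∈ A := hAclosed.csSup_mem hA hAbdd
                obtain ⟨⟨hs₁x, hs₁z⟩, hs₁b⟩ := hs₁mem
                have hs₁b' : v s₁ j ≤ b := hs₁b
                have hmid : ∀ u ∈ Set.Ioo s₁ z, b < v u j := by
                  intro u hu
                  by_contra hle
                  push_neg at hle
                  have : u ∈ A := ⟨⟨le_trans hs₁x hu.1.le, hu.2.le⟩, hle⟩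
                  exact absurd (le_csSup hAbdd this) (not_le.2 hu.1)
                have hsub2 : Set.Icc s₁ z ⊆ Set.Ici (0 : ℝ) :=
                  fun y hy => le_trans (le_trans hx0 hs₁x) hy.1
                have hmvt : v z j - v s₁ j ≤ r₁ * (z - s₁) :=
                  oneSidedMVT hs₁z
                    (fun u hu => (hv j u (hsub2 hu)).mono hsub2)
                    (fun u hu => hbound_r₁ u (lt_of_le_of_lt hs₁x hu.1) hu.2
                      (hmid u hu).le)
                have hmul : r₁ * (z - s₁) ≤ r₁ * (z - x) :=
                  mul_le_mul_of_nonneg_left (by linarith) hr₁0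
                linarith
              · rw [Set.not_nonempty_iff_eq_empty] at hA
                have hforall : ∀ u ∈ Set.Ioo x z, b < v u j := by
                  intro u hu
                  by_contra hle
                  push_neg at hle
                  have : u ∈ A := ⟨⟨hu.1.le, hu.2.le⟩, hle⟩
                  rw [hA] at this
                  exact this
                have hsub2 : Set.Icc x z ⊆ Set.Ici (0 : ℝ) :=
                  fun y hy => le_trans hx0 hy.1
                have hmvt : v z j - v x j ≤ r₁ * (z - x) :=
                  oneSidedMVT hxz.le
                    (fun u hu => (hv j u (hsub2 hu)).mono hsub2)
                    (fun u hu => hbound_r₁ u hu.1 hu.2 (hforall u hu).le)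
                have := hle_m x hx0 j
                linarith
          have hmz : m z ≤ m x + r₁ * (z - x) := hm_le _ _ hcomp_j
          rw [slope_def_field, div_lt_iff₀ (by linarith : (0:ℝ) < z - x)]
          have hmul2 : r₁ * (z - x) < r * (z - x) :=
            mul_lt_mul_of_pos_right hr₁lt (by linarith)
          linarith
        refine Filter.Eventually.frequently ?_
        filter_upwards [Ioc_mem_nhdsGT_of_mem
            (show x ∈ Set.Ico x (x + h₀) from ⟨le_rfl, by linarith⟩)]
          with z hz using hev z hz
      · -- away from contact: use the Lipschitz bound
        rw [hFdef] at hr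
        simp only [if_neg hmb] at hr
        have hev : ∀ z ∈ Set.Ioc x (x + 1), slope m x z < r := by
          intro z hz
          have hxz : x < z := hz.1
          have := (abs_le.1 (hm_lip x z hx0 hxz.le)).2
          rw [slope_def_field, div_lt_iff₀ (by linarith : (0:ℝ) < z - x)]
          have hmul2 : C * (z - x) < r * (z - x) :=
            mul_lt_mul_of_pos_right hr (by linarith)
          linarith
        refine Filter.Eventually.frequently ?_
        filter_upwards [Ioc_mem_nhdsGT_of_mem
            (show x ∈ Set.Ico x (x + 1) from ⟨le_rfl, by linarith⟩)]
          with z hz using hev z hz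
    · -- initial condition
      have : m 0 ≤ b := hm_le _ _ hinit
      have : (0:ℝ) < ε * Real.exp (L * 0) := by positivity
      rw [hBdef]
      dsimp only
      linarith
    · -- continuity of B
      apply ContinuousOn.add continuousOn_const
      exact (continuousOn_const.mul ((Real.continuous_exp.comp
        (continuous_const.mul continuous_id)).continuousOn))
    · -- derivative of B
      intro x _
      have h1 : HasDerivAt (fun s : ℝ => L * s) (L * 1) x := (hasDerivAt_id x).const_mul L
      have h2 := (h1.exp.const_mul ε).const_add b
      exact h2.hasDerivWithinAt
    · -- the strict bound at contact points
      intro x _ hmb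
      rw [hFdef]
      simp only [if_pos hmb]
      have h1 : (μ / 4 * (B x - b) + B' x) / 2 < B' x := by
        rw [hBx, hB'x]
        have : (0:ℝ) < ε * Real.exp (L * x) := by positivity
        linarith
      exact h1
  -- let ε → 0
  have hmt0 : m t0 ≤ b := by
    by_contra h
    push_neg at h
    set ε : ℝ := (m t0 - b) / (2 * Real.exp (L * t0)) with hεdef
    have hε : 0 < ε := by
      apply div_pos (by linarith) (by positivity)
    have hc := hcomp ε hε
    have hE : ε * Real.exp (L * t0) = (m t0 - b) / 2 := by
      rw [hεdef]
      field_simp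
    rw [hE] at hc
    linarith
  exact le_trans (hle_m t0 ht0.le j0) hmt0

/-- Invariance of the interval between two stationary states on the
bi-infinite network. If `a ≤ b` are fixed points of `S` and `v` is a componentwise `C¹`,
uniformly bounded solution of the lattice equation on `ℤ` with `v_j(0) ∈ [a,b]` for all
`j ∈ ℤ`, then `v_j(t) ∈ [a,b]` for all `t > 0` and `j ∈ ℤ`. -/
theorem stmt_19 (μ θ p q : ℝ) (hμ : 0 < μ) (hθ : 0 ≤ θ)
    (hp : 0 ≤ p) (hq0 : 0 ≤ q) (hq1 : q ≤ 1) (hpq : p + q ≤ 1)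
    (a b : ℝ) (hab : a ≤ b) (ha : sigmoid μ θ a = a) (hb : sigmoid μ θ b = b)
    (v v' : ℝ → ℤ → ℝ)
    -- componentwise continuously differentiable on [0,∞)
    (hv : ∀ j : ℤ, ∀ t ∈ Set.Ici (0 : ℝ),
      HasDerivWithinAt (fun s => v s j) (v' t j) (Set.Ici (0 : ℝ)) t)
    (hv' : ∀ j : ℤ, ContinuousOn (fun t => v' t j) (Set.Ici (0 : ℝ)))
    -- uniform bound
    (M : ℝ) (hM : 0 < M)
    (hbound : ∀ t ∈ Set.Ici (0 : ℝ), ∀ j : ℤ, |v t j| ≤ M)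
    -- the lattice equation
    (heq : ∀ t > (0 : ℝ), ∀ j : ℤ,
      v' t j = Nfun μ θ p q (v t (j - 1)) (v t j) (v t (j + 1)))
    -- initial datum
    (hinit : ∀ j : ℤ, v 0 j ∈ Set.Icc a b) :
    ∀ t > (0 : ℝ), ∀ j : ℤ, v t j ∈ Set.Icc a b := by
  have hupper := upper_invariant μ θ p q hμ hp hq0 hpq b hb v v' hv M hM hbound heq
    (fun j => (hinit j).2)
  have hlower := upper_invariant μ (1 - θ) p q hμ hp hq0 hpq (1 - a)
    (by rw [sigmoid_flip, ha])
    (fun t j => 1 - v t j) (fun t j => -(v' t j))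
    (fun j t ht => (hv j t ht).const_sub 1)
    (M + 1) (by linarith)
    (fun t ht j => by
      have h := abs_le.1 (hbound t ht j)
      have h2 : |1 - v t j| ≤ M + 1 := by
        rw [abs_le]; constructor <;> linarith [h.1, h.2]
      exact h2)
    (fun t ht j => by
      have h2 : -(v' t j) = Nfun μ (1 - θ) p q (1 - v t (j - 1)) (1 - v t j)
          (1 - v t (j + 1)) := by
        rw [Nfun_flip, heq t ht j]
      exact h2)
    (fun j => by
      have h2 : 1 - v 0 j ≤ 1 - a := by linarith [(hinit j).1]
      exact h2)
  intro t ht j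
  refine ⟨?_, hupper t ht j⟩
  have h2 : 1 - v t j ≤ 1 - a := hlower t ht j
  linarith
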